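/- Let Sigma-integral denote extraction of the coefficient of T1*T2*...*Tl in Z[T1,...,Tl]/(T1^2,...,Tl^2), and set Hhat_i = sum_{j != i} T_j. Then the integral of the product over i of Hhat_i (i.e., the coefficient of T1...Tl in prod_{i=1}^l (sum_{j != i} T_j)) equals the number of derangements of {1,...,l}. -/

import Mathlib

open MvPolynomial Finset

lemma aux_X_def {l : ℕ} (j : Fin l) :
    (X j : MvPolynomial (Fin l) ℤ) = monomial (Finsupp.single j 1) 1 := by
  rw [← X_pow_eq_monomial, pow_one]

lemma aux_prod_X {l : ℕ} (p : Fin l → Fin l) (s : Finset (Fin l)) :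
    (∏ i ∈ s, (X (p i) : MvPolynomial (Fin l) ℤ)) =
      monomial (∑ i ∈ s, Finsupp.single (p i) 1) 1 := by
  classical
  induction s using Finset.induction_on with
  | empty => simp [monomial_zero']
  | insert _ _ h ih =>
      rw [Finset.prod_insert h, Finset.sum_insert h, ih, aux_X_def, monomial_mul, mul_one]

lemma aux_sum_single_eq {l : ℕ} (p : Fin l → Fin l) :
    (∑ i : Fin l, Finsupp.single (p i) 1 : Fin l →₀ ℕ) =
      (Finsupp.equivFunOnFinite.symm fun _ : Fin l => 1) ↔ Function.Bijective p := by
  classical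
  rw [Function.bijective_iff_existsUnique]
  constructor
  · intro h j
    have hj : (∑ i : Fin l, Finsupp.single (p i) 1 : Fin l →₀ ℕ) j = 1 := by
      rw [h]; simp
    rw [Finsupp.finset_sum_apply] at hj
    simp only [Finsupp.single_apply] at hj
    rw [Finset.sum_boole] at hj
    simp only [Nat.cast_id] at hj
    obtain ⟨a, ha⟩ := Finset.card_eq_one.mp hj
    refine ⟨a, ?_, ?_⟩
    · have := Finset.mem_singleton_self a
      rw [← ha, Finset.mem_filter] at this
      exact this.2
    · intro b hb
      have : b ∈ Finset.filter (fun i => p i = j) Finset.univ := by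
        simp [hb]
      rw [ha, Finset.mem_singleton] at this
      exact this
  · intro h
    ext j
    obtain ⟨a, ha, hu⟩ := h j
    rw [Finsupp.finset_sum_apply]
    simp only [Finsupp.single_apply]
    rw [Finset.sum_boole]
    simp only [Nat.cast_id]
    have : Finset.filter (fun i => p i = j) Finset.univ = {a} := by
      ext b
      simp only [Finset.mem_filter, Finset.mem_univ, true_and, Finset.mem_singleton]
      exact ⟨fun hb => hu b hb, fun hb => hb ▸ ha⟩
    rw [this]
    simp

lemma aux_card {l : ℕ} :
    ((Fintype.piFinset fun i : Fin l => Finset.univ.erase i).filter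
        (fun p => Function.Bijective p)).card = numDerangements l := by
  classical
  rw [← card_derangements_fin_eq_numDerangements, ← Fintype.card_coe]
  refine Fintype.card_congr ?_
  refine
    { toFun := fun x => ?_
      invFun := fun σ => ?_
      left_inv := ?_
      right_inv := ?_ }
  · obtain ⟨p, hp⟩ := x
    rw [Finset.mem_filter, Fintype.mem_piFinset] at hp
    refine ⟨Equiv.ofBijective p hp.2, fun i => ?_⟩
    have := hp.1 i
    rw [Finset.mem_erase] at this
    exact this.1
  · obtain ⟨σ, hσ⟩ := σ
    refine ⟨σ, ?_⟩
    rw [Finset.mem_filter, Fintype.mem_piFinset]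
    exact ⟨fun i => Finset.mem_erase.mpr ⟨hσ i, Finset.mem_univ _⟩, σ.bijective⟩
  · rintro ⟨p, hp⟩; rfl
  · rintro ⟨σ, hσ⟩
    exact Subtype.ext (Equiv.ext fun x => rfl)

/-- The coefficient of T₁T₂⋯Tₗ in ∏ᵢ (∑_{j ≠ i} Tⱼ) equals the number of
derangements of {1,…,ℓ}. -/
theorem stmt7 (l : ℕ) :
    MvPolynomial.coeff (Finsupp.equivFunOnFinite.symm fun _ : Fin l => 1)
      (∏ i : Fin l, ∑ j ∈ Finset.univ.erase i, (X j : MvPolynomial (Fin l) ℤ)) =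
    (numDerangements l : ℤ) := by
  classical
  rw [Finset.prod_univ_sum, MvPolynomial.coeff_sum]
  have key : ∀ p : Fin l → Fin l,
      MvPolynomial.coeff (Finsupp.equivFunOnFinite.symm fun _ : Fin l => 1)
        (∏ i : Fin l, (X (p i) : MvPolynomial (Fin l) ℤ)) =
      if Function.Bijective p then 1 else 0 := by
    intro p
    rw [aux_prod_X, coeff_monomial]
    by_cases h : Function.Bijective p
    · rw [if_pos ((aux_sum_single_eq p).mpr h), if_pos h]
    · rw [if_neg (fun hc => h ((aux_sum_single_eq p).mp hc)), if_neg h]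
  simp_rw [key]
  rw [Finset.sum_boole, ← aux_card (l := l)]
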